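/- Let (X, μ) be a probability space, let φ : X → X be an ergodic measure-preserving transformation, and let f ∈ L²(X, μ). Suppose there is a constant K > 0 such that for all N ≥ 1, ∫_X ( Σ_{n=0}^{N−1} ( f(φ^n x) − ∫_X f dμ ) )² dμ(x) ≤ K·N. Then for every ε > 0 and μ-almost every x ∈ X there exist C(x) > 0 and N₀ such that for all N > N₀, | (1/N) Σ_{n=0}^{N−1} f(φ^n x) − ∫_X f dμ | ≤ C(x) · N^{−1/2} (log N)^{3/2} (log log N)^{1/2+ε}. -/

import Mathlib

open MeasureTheory Filter Finset

section GaposhkinAux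

/-- Dyadic chaining decomposition for an additive cocycle-type array `T a b` ("sum over `[a,a+b)`"). -/
lemma gap_chain (T : ℕ → ℕ → ℝ)
    (hT : ∀ a b c, T a (b + c) = T a b + T (a + b) c) (k : ℕ) :
    ∀ j, j ≤ k → ∀ i, i < 2^(k-j) → ∀ M, M ≤ 2^j → ∃ u : ℕ → ℝ,
      (T (2^k + i * 2^j) M = ∑ j' ∈ Finset.range (j+1), u j') ∧
      (∀ j' ≤ j, (u j')^2 ≤ ∑ i' ∈ Finset.range (2^(k-j')), (T (2^k + i' * 2^j') (2^j'))^2) ∧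
      (M < 2^j → u j = 0) := by
  have hT0 : ∀ a, T a 0 = 0 := by
    intro a
    have := hT a 0 0
    simp at this
    linarith
  intro j
  induction j with
  | zero =>
    intro _ i hi M hM
    interval_cases M
    · refine ⟨fun _ => (0:ℝ), by simpa using hT0 _, ?_, fun _ => rfl⟩
      intro j' hj'
      simpa using Finset.sum_nonneg (fun i' _ => sq_nonneg _)
    · refine ⟨fun _ => T (2^k + i * 2^0) (2^0), by simp, ?_, by simp⟩
      intro j' hj'
      interval_cases j'
      dsimp only
      exact Finset.single_le_sum (f := fun i' => (T (2^k + i' * 2^0) (2^0))^2)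
        (fun _ _ => sq_nonneg _) (Finset.mem_range.2 hi)
  | succ j IH =>
    intro hjk i hi M hM
    have hjk' : j ≤ k := Nat.le_of_succ_le hjk
    have hsub : k - j = (k - (j+1)) + 1 := by omega
    have h2i : 2*i < 2^(k-j) := by
      rw [hsub, pow_succ]; omega
    have h2i1 : 2*i+1 < 2^(k-j) := by
      rw [hsub, pow_succ]; omega
    have hbase : 2^k + i * 2^(j+1) = 2^k + (2*i) * 2^j := by rw [pow_succ]; ring
    rcases le_or_gt M (2^j) with hMle | hMgt
    · obtain ⟨u, hu1, hu2, hu3⟩ := IH hjk' (2*i) h2i M hMle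
      set u' : ℕ → ℝ := fun j' => if j' = j+1 then 0 else u j' with hu'
      have hj1 : u' (j+1) = 0 := by simp [hu']
      have hlt : ∀ j' ∈ Finset.range (j+1), u' j' = u j' := by
        intro j' hj'
        have := Finset.mem_range.1 hj'
        simp only [hu']; rw [if_neg (by omega)]
      have hsum : ∑ j' ∈ Finset.range (j+1+1), u' j' = ∑ j' ∈ Finset.range (j+1), u j' := by
        rw [Finset.sum_range_succ, hj1, add_zero, Finset.sum_congr rfl hlt]
      refine ⟨u', ?_, ?_, fun _ => hj1⟩
      · rw [hbase, hu1, hsum]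
      · intro j' hj'
        rcases eq_or_lt_of_le hj' with rfl | h
        · rw [hj1]
          simpa using Finset.sum_nonneg (fun i' _ => sq_nonneg _)
        · have hle : j' ≤ j := by omega
          rw [hlt j' (Finset.mem_range.2 (by omega))]
          exact hu2 j' hle
    · rcases eq_or_lt_of_le hM with rfl | hMlt
      · -- M = 2^(j+1)
        set u' : ℕ → ℝ := fun j' => if j' = j+1 then T (2^k + i * 2^(j+1)) (2^(j+1)) else 0 with hu'
        have hj1 : u' (j+1) = T (2^k + i * 2^(j+1)) (2^(j+1)) := by
          simp [hu']
        have hlt : ∀ j' ∈ Finset.range (j+1), u' j' = 0 := by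
          intro j' hj'
          have := Finset.mem_range.1 hj'
          simp only [hu']; rw [if_neg (by omega)]
        have hsum : ∑ j' ∈ Finset.range (j+1+1), u' j'
            = T (2^k + i * 2^(j+1)) (2^(j+1)) := by
          rw [Finset.sum_range_succ, hj1, Finset.sum_congr rfl hlt]
          simp
        refine ⟨u', hsum.symm, ?_, fun h => absurd h (lt_irrefl _)⟩
        intro j' hj'
        rcases eq_or_lt_of_le hj' with rfl | h
        · rw [hj1]
          exact Finset.single_le_sum (f := fun i' => (T (2^k + i' * 2^(j+1)) (2^(j+1)))^2)
            (fun _ _ => sq_nonneg _) (Finset.mem_range.2 hi)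
        · rw [hlt j' (Finset.mem_range.2 (by omega))]
          simpa using Finset.sum_nonneg (fun i' _ => sq_nonneg _)
      · -- 2^j < M < 2^(j+1)
        have hM'lt : M - 2^j < 2^j := by
          rw [pow_succ] at hMlt; omega
        obtain ⟨u, hu1, hu2, hu3⟩ := IH hjk' (2*i+1) h2i1 (M - 2^j) hM'lt.le
        have hu30 : u j = 0 := hu3 hM'lt
        set u' : ℕ → ℝ := fun j' => if j' = j+1 then 0
            else if j' = j then T (2^k + (2*i) * 2^j) (2^j) else u j' with hu'
        have hj1 : u' (j+1) = 0 := by simp [hu']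
        have hjj : u' j = T (2^k + (2*i) * 2^j) (2^j) := by
          simp [hu']
        have hlt : ∀ j' ∈ Finset.range j, u' j' = u j' := by
          intro j' hj'
          have := Finset.mem_range.1 hj'
          simp only [hu']; rw [if_neg (by omega), if_neg (by omega)]
        have hsum : ∑ j' ∈ Finset.range (j+1+1), u' j'
            = T (2^k + (2*i) * 2^j) (2^j) + ∑ j' ∈ Finset.range (j+1), u j' := by
          rw [Finset.sum_range_succ, hj1, add_zero, Finset.sum_range_succ, hjj,
            Finset.sum_congr rfl hlt, Finset.sum_range_succ (f := u), hu30, add_zero]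
          ring
        have hsplit : T (2^k + i * 2^(j+1)) M
            = T (2^k + (2*i) * 2^j) (2^j) + T (2^k + (2*i+1) * 2^j) (M - 2^j) := by
          have hMsum : M = 2^j + (M - 2^j) := by omega
          rw [hbase]
          nth_rewrite 1 [hMsum]
          rw [hT]
          congr 2
          ring
        refine ⟨u', ?_, ?_, fun _ => hj1⟩
        · rw [hsplit, hu1, hsum]
        · intro j' hj'
          rcases eq_or_lt_of_le hj' with rfl | h
          · rw [hj1]
            simpa using Finset.sum_nonneg (fun i' _ => sq_nonneg _)
          · have hj'j : j' ≤ j := by omega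
            rcases eq_or_lt_of_le hj'j with rfl | h2
            · rw [hjj]
              exact Finset.single_le_sum (f := fun i' => (T (2^k + i' * 2^j') (2^j'))^2)
                (fun _ _ => sq_nonneg _) (Finset.mem_range.2 h2i)
            · rw [hlt j' (Finset.mem_range.2 h2)]
              exact hu2 j' hj'j

/-- Consequence: square of a partial block sum is controlled by the dyadic square function. -/
lemma gap_chain' (T : ℕ → ℕ → ℝ)
    (hT : ∀ a b c, T a (b + c) = T a b + T (a + b) c) (k M : ℕ) (hM : M ≤ 2^k) :
    (T (2^k) M)^2 ≤ ((k:ℝ)+1) *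
      ∑ j ∈ Finset.range (k+1), ∑ i ∈ Finset.range (2^(k-j)), (T (2^k + i * 2^j) (2^j))^2 := by
  obtain ⟨u, hu1, hu2, -⟩ := gap_chain T hT k k le_rfl 0 (by simp) M hM
  have h0 : T (2^k) M = ∑ j' ∈ Finset.range (k+1), u j' := by
    simpa using hu1
  rw [h0]
  calc (∑ j' ∈ Finset.range (k+1), u j')^2
      ≤ (Finset.range (k+1)).card * ∑ j' ∈ Finset.range (k+1), (u j')^2 :=
        sq_sum_le_card_mul_sum_sq
    _ ≤ ((k:ℝ)+1) * ∑ j ∈ Finset.range (k+1), ∑ i ∈ Finset.range (2^(k-j)), (T (2^k + i * 2^j) (2^j))^2 := by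
        rw [Finset.card_range]
        push_cast
        gcongr with j' hj'
        exact hu2 j' (by simpa using Nat.lt_succ_iff.1 (Finset.mem_range.1 hj'))


/-- Summability of `∑ 1/((k+2) log(k+2)^{1+δ})` for `δ > 0`, via Cauchy condensation. -/
lemma gap_summable {δ : ℝ} (hδ : 0 < δ) :
    Summable (fun k : ℕ => 1 / ((((k:ℝ)+2)) * (Real.log ((k:ℝ)+2))^((1:ℝ)+δ))) := by
  set b : ℕ → ℝ := fun k => 1 / ((((k:ℝ)+2)) * (Real.log ((k:ℝ)+2))^((1:ℝ)+δ)) with hb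
  have hlogpos : ∀ k : ℕ, 0 < Real.log ((k:ℝ)+2) := by
    intro k
    apply Real.log_pos
    push_cast
    linarith [Nat.cast_nonneg (α := ℝ) k]
  have hdenpos : ∀ k : ℕ, 0 < (((k:ℝ)+2)) * (Real.log ((k:ℝ)+2))^((1:ℝ)+δ) := by
    intro k
    apply mul_pos (by positivity)
    exact Real.rpow_pos_of_pos (hlogpos k) _
  have h_nonneg : ∀ k, 0 ≤ b k := fun k => le_of_lt (by rw [hb]; exact div_pos one_pos (hdenpos k))
  have h_mono : ∀ ⦃m n : ℕ⦄, 0 < m → m ≤ n → b n ≤ b m := by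
    intro m n _ hmn
    rw [hb]
    dsimp only
    apply one_div_le_one_div_of_le (hdenpos m)
    have hcast : ((m:ℝ)+2) ≤ ((n:ℝ)+2) := by
      have : (m:ℝ) ≤ n := Nat.cast_le.2 hmn
      linarith
    apply mul_le_mul hcast ?_ (le_of_lt (Real.rpow_pos_of_pos (hlogpos m) _)) (by positivity)
    apply Real.rpow_le_rpow (Real.log_nonneg (by push_cast; linarith [Nat.cast_nonneg (α := ℝ) m]))
      (Real.log_le_log (by positivity) hcast) (by linarith)
  rw [← summable_condensed_iff_of_nonneg h_nonneg h_mono]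
  apply (summable_nat_add_iff 1).1
  have hsum : Summable (fun k : ℕ => (Real.log 2)^(-((1:ℝ)+δ)) * ((k:ℝ)+1)^(-((1:ℝ)+δ))) := by
    apply Summable.mul_left
    have h0 : Summable (fun n : ℕ => ((n:ℝ))^(-((1:ℝ)+δ))) := Real.summable_nat_rpow.2 (by linarith)
    have h1 := (summable_nat_add_iff (f := fun n : ℕ => ((n:ℝ))^(-((1:ℝ)+δ))) 1).2 h0
    exact h1.congr (fun n => by push_cast; ring)
  apply Summable.of_nonneg_of_le ?_ ?_ hsum
  · intro k
    have := hdenpos (2^(k+1))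
    positivity
  · intro k
    -- 2^(k+1) * b (2^(k+1)) ≤ (log 2)^(-(1+δ)) * (k+1)^(-(1+δ))
    have hk1 : (0:ℝ) < (k:ℝ)+1 := by positivity
    have hlog2 : (0:ℝ) < Real.log 2 := Real.log_pos (by norm_num)
    have hklog : (0:ℝ) < ((k:ℝ)+1) * Real.log 2 := by positivity
    have hlogle : ((k:ℝ)+1) * Real.log 2 ≤ Real.log (((2:ℝ)^(k+1) : ℝ) + 2) := by
      calc ((k:ℝ)+1) * Real.log 2 = Real.log ((2:ℝ)^(k+1)) := by
            rw [Real.log_pow]; push_cast; ring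
        _ ≤ Real.log (((2:ℝ)^(k+1)) + 2) := by
            apply Real.log_le_log (by positivity) (by linarith)
    have hb2 : b (2^(k+1)) ≤ 1 / (((2:ℝ)^(k+1)) * (((k:ℝ)+1) * Real.log 2)^((1:ℝ)+δ)) := by
      rw [hb]
      dsimp only
      apply one_div_le_one_div_of_le (by positivity)
      push_cast
      apply mul_le_mul (by linarith) ?_ (by positivity) (by positivity)
      exact Real.rpow_le_rpow hklog.le hlogle (by linarith)
    calc (2:ℝ)^(k+1) * b (2^(k+1))
        ≤ (2:ℝ)^(k+1) * (1 / (((2:ℝ)^(k+1)) * (((k:ℝ)+1) * Real.log 2)^((1:ℝ)+δ))) := by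
          apply mul_le_mul_of_nonneg_left hb2 (by positivity)
      _ = (((k:ℝ)+1) * Real.log 2)^(-((1:ℝ)+δ)) := by
          rw [Real.rpow_neg hklog.le]
          field_simp
      _ = (Real.log 2)^(-((1:ℝ)+δ)) * ((k:ℝ)+1)^(-((1:ℝ)+δ)) := by
          rw [Real.mul_rpow hk1.le hlog2.le]
          ring

end GaposhkinAux


noncomputable section

set_option maxHeartbeats 2000000 in
/-- **Gaposhkin–Kachurovskii effective ergodic theorem**: if the second moment of the ergodic
sums of `f` grows at most linearly in `N`, then for every `ε > 0` the Birkhoff averages of `f`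
converge a.e. with error of order `N^{-1/2} (log N)^{3/2} (log log N)^{1/2+ε}`. -/
theorem gaposhkin_effective_ergodic_theorem
    {X : Type*} [MeasurableSpace X] (μ : Measure X) [IsProbabilityMeasure μ]
    (φ : X → X) (hφ : Ergodic φ μ)
    (f : X → ℝ) (hf : MemLp f 2 μ)
    (K : ℝ) (hK : 0 < K)
    (hsecond : ∀ N : ℕ, 1 ≤ N →
      ∫ x, (∑ n ∈ Finset.range N, (f (φ^[n] x) - ∫ y, f y ∂μ)) ^ 2 ∂μ ≤ K * N) :
    ∀ ε > (0:ℝ), ∀ᵐ x ∂μ, ∃ C > (0:ℝ), ∃ N₀ : ℕ, ∀ N : ℕ, N > N₀ →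
      |(1 / (N:ℝ)) * ∑ n ∈ Finset.range N, f (φ^[n] x) - ∫ y, f y ∂μ|
        ≤ C * (N : ℝ) ^ (-(1:ℝ)/2) * (Real.log N) ^ ((3:ℝ)/2) *
            (Real.log (Real.log N)) ^ ((1:ℝ)/2 + ε) := by
  intro ε hε
  set m : ℝ := ∫ y, f y ∂μ with hm
  set g : X → ℝ := fun x => f x - m with hgdef
  set S : ℕ → X → ℝ := fun n x => ∑ i ∈ Finset.range n, g (φ^[i] x) with hSdef
  -- basic measure-preserving facts
  have hmp : MeasurePreserving φ μ μ := hφ.toMeasurePreserving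
  have hmpI : ∀ t : ℕ, MeasurePreserving (φ^[t]) μ μ := fun t => hmp.iterate t
  have hgL2 : MemLp g 2 μ := hf.sub (memLp_const m)
  have hSL2 : ∀ n, MemLp (S n) 2 μ := by
    intro n
    have h1 := memLp_finsetSum' (Finset.range n)
      (fun i _ => hgL2.comp_measurePreserving (hmpI i)) (p := 2) (μ := μ)
    exact h1.ae_eq (Filter.Eventually.of_forall (fun x => by simp [hSdef]))
  have hSL2c : ∀ n t, MemLp (fun x => S n (φ^[t] x)) 2 μ :=
    fun n t => (hSL2 n).comp_measurePreserving (hmpI t)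
  have hIntSq : ∀ n t, Integrable (fun x => (S n (φ^[t] x))^2) μ :=
    fun n t => (hSL2c n t).integrable_sq
  have hIntSq0 : ∀ n, Integrable (fun x => (S n x)^2) μ := fun n => (hSL2 n).integrable_sq
  -- change of variables
  have hCoV : ∀ n t, ∫ x, (S n (φ^[t] x))^2 ∂μ = ∫ x, (S n x)^2 ∂μ := by
    intro n t
    have hmeas : AEStronglyMeasurable (fun y => (S n y)^2) (Measure.map (φ^[t]) μ) := by
      rw [(hmpI t).map_eq]
      exact (hIntSq0 n).aestronglyMeasurable
    rw [← integral_map (hmpI t).measurable.aemeasurable hmeas, (hmpI t).map_eq]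
  -- second moment bound
  have hS2 : ∀ n : ℕ, ∫ x, (S n x)^2 ∂μ ≤ K * n := by
    intro n
    rcases Nat.eq_zero_or_pos n with rfl | hn
    · simp [hSdef]
    · exact hsecond n hn
  -- the cocycle property
  have hcocycle : ∀ (x : X) (a b : ℕ), S (a + b) x = S a x + S b (φ^[a] x) := by
    intro x a b
    rw [hSdef]
    dsimp only
    rw [Finset.sum_range_add]
    congr 1
    apply Finset.sum_congr rfl
    intro i _
    congr 1
    rw [← Function.iterate_add_apply, Nat.add_comm]
  -- the square function over dyadic blocks
  set Mk : ℕ → X → ℝ := fun k x => 2*(S (2^k) x)^2 + 2*((k:ℝ)+1) *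
      ∑ j ∈ Finset.range (k+1), ∑ i ∈ Finset.range (2^(k-j)),
        (S (2^j) (φ^[2^k + i * 2^j] x))^2 with hMkdef
  have hMk_pt : ∀ (k : ℕ) (x : X) (N : ℕ), 2^k ≤ N → N < 2^(k+1) → (S N x)^2 ≤ Mk k x := by
    intro k x N h1 h2
    set T : ℕ → ℕ → ℝ := fun a b => S b (φ^[a] x) with hTdef
    have hTadd : ∀ a b c, T a (b + c) = T a b + T (a + b) c := by
      intro a b c
      rw [hTdef]
      dsimp only
      rw [hcocycle (φ^[a] x) b c, ← Function.iterate_add_apply, Nat.add_comm b a]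
    have hMle : N - 2^k ≤ 2^k := by
      rw [pow_succ] at h2; omega
    have hchain := gap_chain' T hTadd k (N - 2^k) hMle
    have hsplit : S N x = S (2^k) x + T (2^k) (N - 2^k) := by
      rw [hTdef]
      dsimp only
      rw [← hcocycle x (2^k) (N - 2^k), Nat.add_sub_cancel' h1]
    rw [hMkdef]
    dsimp only
    rw [hsplit]
    have hknn : (0:ℝ) ≤ (k:ℝ)+1 := by positivity
    nlinarith [hchain, sq_nonneg (S (2^k) x - T (2^k) (N - 2^k)),
      sq_nonneg (S (2^k) x + T (2^k) (N - 2^k))]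
  -- integrability of Mk
  have hintsum : ∀ k : ℕ, ∀ j ∈ Finset.range (k+1), Integrable
      (fun x => ∑ i ∈ Finset.range (2^(k-j)), (S (2^j) (φ^[2^k + i * 2^j] x))^2) μ :=
    fun k j _ => integrable_finset_sum _ (fun i _ => hIntSq (2^j) _)
  have hMkint : ∀ k, Integrable (Mk k) μ := by
    intro k
    rw [hMkdef]
    exact ((hIntSq0 (2^k)).const_mul 2).add
      ((integrable_finset_sum _ (hintsum k)).const_mul _)
  -- integral bound for Mk
  have hMkbound : ∀ k : ℕ, ∫ x, Mk k x ∂μ ≤ 4*K*((k:ℝ)+1)^2*(2:ℝ)^k := by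
    intro k
    have h1 : ∫ x, Mk k x ∂μ = 2*(∫ x, (S (2^k) x)^2 ∂μ) + 2*((k:ℝ)+1) *
        ∑ j ∈ Finset.range (k+1), ∑ i ∈ Finset.range (2^(k-j)),
          ∫ x, (S (2^j) (φ^[2^k + i * 2^j] x))^2 ∂μ := by
      rw [hMkdef]
      dsimp only
      rw [integral_add ((hIntSq0 (2^k)).const_mul 2)
          ((integrable_finset_sum _ (hintsum k)).const_mul _),
        integral_const_mul, integral_const_mul, integral_finset_sum _ (hintsum k)]
      congr 2
      exact Finset.sum_congr rfl fun j _ => integral_finset_sum _ (fun i _ => hIntSq (2^j) _)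
    have h2 : ∑ j ∈ Finset.range (k+1), ∑ i ∈ Finset.range (2^(k-j)),
        ∫ x, (S (2^j) (φ^[2^k + i * 2^j] x))^2 ∂μ ≤ ((k:ℝ)+1) * (K * (2:ℝ)^k) := by
      calc ∑ j ∈ Finset.range (k+1), ∑ i ∈ Finset.range (2^(k-j)),
          ∫ x, (S (2^j) (φ^[2^k + i * 2^j] x))^2 ∂μ
          ≤ ∑ j ∈ Finset.range (k+1), ∑ i ∈ Finset.range (2^(k-j)), K * (2:ℝ)^j := by
            apply Finset.sum_le_sum
            intro j _
            apply Finset.sum_le_sum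
            intro i _
            rw [hCoV]
            have := hS2 (2^j)
            calc ∫ x, (S (2^j) x)^2 ∂μ ≤ K * ((2^j : ℕ):ℝ) := hS2 (2^j)
              _ = K * (2:ℝ)^j := by push_cast; ring
        _ = ∑ j ∈ Finset.range (k+1), (K * (2:ℝ)^k) := by
            apply Finset.sum_congr rfl
            intro j hj
            rw [Finset.sum_const, Finset.card_range, nsmul_eq_mul]
            have hjk : j ≤ k := Nat.lt_succ_iff.1 (Finset.mem_range.1 hj)
            have : ((2^(k-j) : ℕ):ℝ) * (2:ℝ)^j = (2:ℝ)^k := by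
              push_cast
              rw [← pow_add, Nat.sub_add_cancel hjk]
            calc ((2^(k-j) : ℕ):ℝ) * (K * (2:ℝ)^j) = K * (((2^(k-j) : ℕ):ℝ) * (2:ℝ)^j) := by ring
              _ = K * (2:ℝ)^k := by rw [this]
        _ = ((k:ℝ)+1) * (K * (2:ℝ)^k) := by
            rw [Finset.sum_const, Finset.card_range, nsmul_eq_mul]
            push_cast
            ring
    rw [h1]
    have h3 := hS2 (2^k)
    have h3' : ∫ x, (S (2^k) x)^2 ∂μ ≤ K * (2:ℝ)^k := by
      calc ∫ x, (S (2^k) x)^2 ∂μ ≤ K * ((2^k : ℕ):ℝ) := hS2 (2^k)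
        _ = K * (2:ℝ)^k := by push_cast; ring
    have hknn : (1:ℝ) ≤ (k:ℝ)+1 := by
      have := Nat.cast_nonneg (α := ℝ) k
      linarith
    have hp : (0:ℝ) < (2:ℝ)^k := by positivity
    have hc1 : (1:ℝ) ≤ ((k:ℝ)+1)^2 := by nlinarith
    have h2c : (0:ℝ) ≤ 2*((k:ℝ)+1) := by linarith
    nlinarith [mul_le_mul_of_nonneg_left h2 h2c, h3', mul_pos hK hp,
      mul_le_mul_of_nonneg_left hc1 (mul_pos hK hp).le]
  -- thresholds and Markov inequality
  have hlogpos : ∀ k : ℕ, (0:ℝ) < Real.log ((k:ℝ)+2) := by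
    intro k
    apply Real.log_pos
    have := Nat.cast_nonneg (α := ℝ) k
    linarith
  set Lk : ℕ → ℝ := fun k => (Real.log ((k:ℝ)+2))^((1:ℝ)+2*ε) with hLkdef
  have hLkpos : ∀ k, 0 < Lk k := fun k => Real.rpow_pos_of_pos (hlogpos k) _
  set lamsq : ℕ → ℝ := fun k => 4*K*(2:ℝ)^k*((k:ℝ)+2)^3*Lk k with hlamdef
  have hlampos : ∀ k, 0 < lamsq k := by
    intro k
    have h1 := hLkpos k
    have h2 : (0:ℝ) < ((k:ℝ)+2)^3 := by positivity
    rw [hlamdef]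
    dsimp only
    positivity
  set sk : ℕ → Set X := fun k => {x | lamsq k ≤ Mk k x} with hskdef
  set b : ℕ → ℝ := fun k => 1 / ((((k:ℝ)+2)) * (Real.log ((k:ℝ)+2))^((1:ℝ)+2*ε)) with hbdef
  have hbnonneg : ∀ k, 0 ≤ b k := by
    intro k
    rw [hbdef]
    dsimp only
    exact le_of_lt (div_pos one_pos (mul_pos (by positivity)
      (Real.rpow_pos_of_pos (hlogpos k) _)))
  have hskmeas : ∀ k, μ (sk k) ≤ ENNReal.ofReal (b k) := by
    intro k
    have hMknn : 0 ≤ᵐ[μ] Mk k := by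
      apply Filter.Eventually.of_forall
      intro x
      simp only [Pi.zero_apply]
      rw [hMkdef]
      dsimp only
      have h1 : (0:ℝ) ≤ ∑ j ∈ Finset.range (k+1), ∑ i ∈ Finset.range (2^(k-j)),
          (S (2^j) (φ^[2^k + i * 2^j] x))^2 :=
        Finset.sum_nonneg fun j _ => Finset.sum_nonneg fun i _ => sq_nonneg _
      have h2 : (0:ℝ) ≤ (k:ℝ)+1 := by positivity
      nlinarith [sq_nonneg (S (2^k) x)]
    have hmark := mul_meas_ge_le_integral_of_nonneg hMknn (hMkint k) (lamsq k)
    have htoReal : (μ (sk k)).toReal ≤ b k := by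
      have hle : lamsq k * (μ (sk k)).toReal ≤ 4*K*((k:ℝ)+1)^2*(2:ℝ)^k := by
        refine le_trans ?_ (hMkbound k)
        exact hmark
      have hprod : lamsq k * b k = 4*K*(2:ℝ)^k*((k:ℝ)+2)^2 := by
        rw [hlamdef, hbdef]
        dsimp only
        have hLk : Lk k = Real.log ((k:ℝ)+2)^((1:ℝ)+2*ε) := rfl
        rw [hLk]
        have h1 : Real.log ((k:ℝ)+2)^((1:ℝ)+2*ε) ≠ 0 := (Real.rpow_pos_of_pos (hlogpos k) _).ne'
        have h2 : ((k:ℝ)+2) ≠ 0 := by positivity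
        field_simp
      have hfin : 4*K*((k:ℝ)+1)^2*(2:ℝ)^k ≤ lamsq k * b k := by
        rw [hprod]
        have h1 : ((k:ℝ)+1)^2 ≤ ((k:ℝ)+2)^2 := by nlinarith [Nat.cast_nonneg (α := ℝ) k]
        have h2 : (0:ℝ) < (2:ℝ)^k := by positivity
        nlinarith [mul_pos hK h2]
      have := hle.trans hfin
      exact le_of_mul_le_mul_left this (hlampos k)
    rw [ENNReal.le_ofReal_iff_toReal_le (measure_ne_top μ _) (hbnonneg k)]
    exact htoReal
  -- Borel-Cantelli
  have hsumm : Summable b := gap_summable (by linarith : (0:ℝ) < 2*ε)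
  have htsum : (∑' k, μ (sk k)) ≠ ⊤ := by
    apply ne_top_of_le_ne_top ?_ (ENNReal.tsum_le_tsum hskmeas)
    rw [← ENNReal.ofReal_tsum_of_nonneg hbnonneg hsumm]
    exact ENNReal.ofReal_ne_top
  have hBC := MeasureTheory.ae_eventually_notMem htsum
  -- constants
  have hl2 : (0.6931471803:ℝ) < Real.log 2 := Real.log_two_gt_d9
  have hlog2pos : (0:ℝ) < Real.log 2 := by linarith
  set c0 : ℝ := 4*K*(3/Real.log 2)^3*(2:ℝ)^((1:ℝ)+2*ε) with hc0def
  have hc0pos : 0 < c0 := by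
    rw [hc0def]
    have h1 : (0:ℝ) < (2:ℝ)^((1:ℝ)+2*ε) := Real.rpow_pos_of_pos (by norm_num) _
    positivity
  set C : ℝ := Real.sqrt c0 with hCdef
  have hCpos : 0 < C := Real.sqrt_pos.2 hc0pos
  -- almost everywhere conclusion
  filter_upwards [hBC] with x hx
  obtain ⟨k₀, hk₀⟩ := Filter.eventually_atTop.1 hx
  refine ⟨C, hCpos, 2^(max k₀ 9 + 1), ?_⟩
  intro N hN
  have hNpos : 0 < N := lt_of_le_of_lt (Nat.zero_le _) hN
  set k : ℕ := Nat.log 2 N with hkdef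
  have hk1 : 2^k ≤ N := Nat.pow_log_le_self 2 hNpos.ne'
  have hk2 : N < 2^(k+1) := Nat.lt_pow_succ_log_self (by norm_num) N
  have hkmax : max k₀ 9 + 1 ≤ k := by
    rw [hkdef]
    apply (Nat.le_log_iff_pow_le (by norm_num) hNpos.ne').2
    exact le_of_lt hN
  have hkk₀ : k₀ ≤ k := le_trans (le_trans (le_max_left _ _) (Nat.le_succ _)) hkmax
  have hk9 : 9 ≤ k := le_trans (le_trans (le_max_right _ _) (Nat.le_succ _)) hkmax
  have hk9' : (9:ℝ) ≤ (k:ℝ) := by exact_mod_cast hk9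
  -- x is not in sk k
  have hxk : Mk k x < lamsq k := by
    have := hk₀ k hkk₀
    rw [hskdef] at this
    simpa using not_le.1 this
  have hsq : (S N x)^2 < lamsq k := lt_of_le_of_lt (hMk_pt k x N hk1 hk2) hxk
  -- real-number estimates
  set NR : ℝ := (N:ℝ) with hNRdef
  have hNRpos : (0:ℝ) < NR := by
    rw [hNRdef]; exact_mod_cast hNpos
  set logN : ℝ := Real.log NR with hlogNdef
  set LLN : ℝ := Real.log logN with hLLNdef
  have h2kN : ((2:ℝ))^k ≤ NR := by
    rw [hNRdef]
    exact_mod_cast hk1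
  have hlogN : (k:ℝ) * Real.log 2 ≤ logN := by
    rw [hlogNdef]
    have hlp : Real.log ((2:ℝ)^k) = (k:ℝ) * Real.log 2 := by
      rw [Real.log_pow]
    calc (k:ℝ)*Real.log 2 = Real.log ((2:ℝ)^k) := hlp.symm
      _ ≤ Real.log NR := Real.log_le_log (by positivity) h2kN
  have h9log2 : (9:ℝ) * Real.log 2 ≤ (k:ℝ) * Real.log 2 :=
    mul_le_mul_of_nonneg_right hk9' hlog2pos.le
  have hlogNpos : (0:ℝ) < logN := lt_of_lt_of_le (by nlinarith) hlogN
  have hlogN1 : (1:ℝ) < logN := lt_of_lt_of_le (by nlinarith) hlogN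
  have hLLNpos : (0:ℝ) < LLN := Real.log_pos hlogN1
  -- key comparisons
  have hKey1 : ((k:ℝ)+2) ≤ 3/Real.log 2 * logN := by
    rw [div_mul_eq_mul_div, le_div_iff₀ hlog2pos]
    nlinarith
  have hKey2 : Real.log ((k:ℝ)+2) ≤ 2 * LLN := by
    have h1 : ((k:ℝ)+2) ≤ ((k:ℝ)*Real.log 2)^2 := by nlinarith
    have h2 : ((k:ℝ)*Real.log 2)^2 ≤ logN^2 := by
      apply pow_le_pow_left₀ (by positivity) hlogN
    have h3 : Real.log ((k:ℝ)+2) ≤ Real.log (logN^2) :=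
      Real.log_le_log (by positivity) (h1.trans h2)
    rw [Real.log_pow] at h3
    rw [hLLNdef]
    calc Real.log ((k:ℝ)+2) ≤ ((2:ℕ):ℝ) * Real.log logN := h3
      _ = 2 * Real.log logN := by norm_num
  -- bounding lamsq by the target quantity
  have hlogk2nonneg : (0:ℝ) ≤ Real.log ((k:ℝ)+2) := (hlogpos k).le
  have ht2 : ((k:ℝ)+2)^3 ≤ (3/Real.log 2)^3 * logN^3 := by
    rw [← mul_pow]
    exact pow_le_pow_left₀ (by positivity) hKey1 3
  have ht3 : Lk k ≤ (2:ℝ)^((1:ℝ)+2*ε) * LLN^((1:ℝ)+2*ε) := by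
    have hLk : Lk k = Real.log ((k:ℝ)+2)^((1:ℝ)+2*ε) := rfl
    rw [hLk, ← Real.mul_rpow (by norm_num) hLLNpos.le]
    exact Real.rpow_le_rpow hlogk2nonneg hKey2 (by linarith)
  have hlamle : lamsq k ≤ c0 * NR * logN^3 * LLN^((1:ℝ)+2*ε) := by
    have h4K : (0:ℝ) ≤ 4*K := by linarith
    have hd3 : (0:ℝ) ≤ (3/Real.log 2)^3 * logN^3 :=
      mul_nonneg (pow_nonneg (div_nonneg (by norm_num) hlog2pos.le) 3)
        (pow_nonneg hlogNpos.le 3)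
    have s1 : 4*K*((2:ℝ)^k) ≤ 4*K*NR := mul_le_mul_of_nonneg_left h2kN h4K
    have s2 : 4*K*((2:ℝ)^k)*(((k:ℝ)+2)^3) ≤ 4*K*NR*((3/Real.log 2)^3 * logN^3) :=
      mul_le_mul s1 ht2 (by positivity) (mul_nonneg h4K hNRpos.le)
    have hstep : 4*K*((2:ℝ)^k)*(((k:ℝ)+2)^3)*Lk k
        ≤ 4*K*NR*((3/Real.log 2)^3 * logN^3)*((2:ℝ)^((1:ℝ)+2*ε) * LLN^((1:ℝ)+2*ε)) :=
      mul_le_mul s2 ht3 (hLkpos k).le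
        (mul_nonneg (mul_nonneg h4K hNRpos.le) hd3)
    calc lamsq k = 4*K*((2:ℝ)^k)*(((k:ℝ)+2)^3)*Lk k := by rw [hlamdef]
      _ ≤ 4*K*NR*((3/Real.log 2)^3 * logN^3)*((2:ℝ)^((1:ℝ)+2*ε) * LLN^((1:ℝ)+2*ε)) := hstep
      _ = c0 * NR * logN^3 * LLN^((1:ℝ)+2*ε) := by rw [hc0def]; ring
  -- the right-hand side quantity
  set R : ℝ := C * Real.sqrt NR * logN^((3:ℝ)/2) * LLN^((1:ℝ)/2+ε) with hRdef
  have hRnonneg : 0 ≤ R := by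
    rw [hRdef]
    exact mul_nonneg (mul_nonneg (mul_nonneg hCpos.le (Real.sqrt_nonneg _))
      (Real.rpow_nonneg hlogNpos.le _)) (Real.rpow_nonneg hLLNpos.le _)
  have hRsq : R^2 = c0 * NR * logN^3 * LLN^((1:ℝ)+2*ε) := by
    have hC2 : C^2 = c0 := Real.sq_sqrt hc0pos.le
    have h1 : (Real.sqrt NR)^2 = NR := Real.sq_sqrt hNRpos.le
    have h2 : (logN^((3:ℝ)/2))^2 = logN^3 := by
      rw [← Real.rpow_natCast (logN^((3:ℝ)/2)) 2, ← Real.rpow_mul hlogNpos.le]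
      rw [show (3:ℝ)/2 * ((2:ℕ):ℝ) = ((3:ℕ):ℝ) by norm_num]
      exact Real.rpow_natCast logN 3
    have h3 : (LLN^((1:ℝ)/2+ε))^2 = LLN^((1:ℝ)+2*ε) := by
      rw [← Real.rpow_natCast (LLN^((1:ℝ)/2+ε)) 2, ← Real.rpow_mul hLLNpos.le]
      congr 1
      push_cast
      ring
    calc R^2 = C^2 * (Real.sqrt NR)^2 * (logN^((3:ℝ)/2))^2 * (LLN^((1:ℝ)/2+ε))^2 := by
          rw [hRdef]; ring
      _ = c0 * NR * logN^3 * LLN^((1:ℝ)+2*ε) := by rw [hC2, h1, h2, h3]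
  -- conclude |S N x| ≤ R
  have hSR : |S N x| ≤ R := by
    have h := hsq.le.trans (hlamle.trans_eq hRsq.symm)
    calc |S N x| = Real.sqrt ((S N x)^2) := (Real.sqrt_sq_eq_abs _).symm
      _ ≤ Real.sqrt (R^2) := Real.sqrt_le_sqrt h
      _ = R := Real.sqrt_sq hRnonneg
  -- rewrite the goal
  have hSval : S N x = (∑ n ∈ Finset.range N, f (φ^[n] x)) - N * m := by
    rw [hSdef]
    dsimp only
    rw [hgdef]
    dsimp only
    rw [Finset.sum_sub_distrib, Finset.sum_const, Finset.card_range]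
    simp [nsmul_eq_mul]
  have hLHSeq : 1 / NR * (∑ n ∈ Finset.range N, f (φ^[n] x)) - m = S N x / NR := by
    rw [hSval, hNRdef]
    field_simp
  have hRHSeq : C * NR^(-(1:ℝ)/2) * logN^((3:ℝ)/2) * LLN^((1:ℝ)/2+ε) = R / NR := by
    rw [hRdef, Real.sqrt_eq_rpow]
    rw [show -(1:ℝ)/2 = 1/2 - 1 by ring, Real.rpow_sub hNRpos, Real.rpow_one]
    ring
  rw [hLHSeq, hRHSeq, abs_div, abs_of_pos hNRpos]
  exact (div_le_div_iff_of_pos_right hNRpos).2 hSR
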